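/- Let p, q ∈ ℝ² with p ≠ q, and let u, v ∈ ℝ² be nonzero vectors such that ⟪u, q − p⟫ ≤ 0 and ⟪v, p − q⟫ ≤ 0 (each direction makes a non-acute angle with the segment toward the other apex). Then the rays {p + t • u : t ≥ 0} and {q + t • v : t ≥ 0} are disjoint. -/

import Mathlib

noncomputable section

open Real

abbrev Pt : Type := EuclideanSpace ℝ (Fin 2)

instance : Fact (Module.finrank ℝ Pt = 2) := ⟨finrank_euclideanSpace_fin⟩

noncomputable def stdOrient : Orientation ℝ Pt (Fin 2) :=
  (EuclideanSpace.basisFun (Fin 2) ℝ).toBasis.orientation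

/-- A ray in the plane, given by its apex and its direction vector. -/
structure Ray2 where
  apex : Pt
  dir : Pt

/-- The set of points of a ray. -/
def Ray2.carrier (r : Ray2) : Set Pt := {x | ∃ t : ℝ, 0 ≤ t ∧ x = r.apex + t • r.dir}

/-- The representative in `[0, 2π)` of an angle. -/
noncomputable def angleIco (θ : Real.Angle) : ℝ :=
  if 0 ≤ θ.toReal then θ.toReal else θ.toReal + 2 * π

open Classical in
/-- The counterclockwise angular distance from a point `x` to a ray `r`. -/
noncomputable def adist (x : Pt) (r : Ray2) : ℝ :=
  if x = r.apex then 0 else angleIco (stdOrient.oangle r.dir (x - r.apex))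

/-- The Voronoi region of a ray `r` in a finite set of rays `R`. -/
def rreg (R : Finset Ray2) (r : Ray2) : Set Pt :=
  {x | ∀ s ∈ R, s ≠ r → adist x r < adist x s}

/-- The rotating rays Voronoi diagram. -/
def RVD (R : Finset Ray2) : Set Pt :=
  (Set.univ \ ⋃ r ∈ R, rreg R r) ∪ ⋃ r ∈ R, r.carrier

/-- The point of the plane with the given coordinates. -/
noncomputable def pt (a b : ℝ) : Pt := (WithLp.equiv 2 (Fin 2 → ℝ)).symm ![a, b]

/-- two rays whose directions make non-acute angles with the segment toward
the other apex are disjoint. -/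
theorem stmt11 (p q u v : Pt) (hpq : p ≠ q) (hu : u ≠ 0) (hv : v ≠ 0)
    (h1 : (inner ℝ u (q - p) : ℝ) ≤ 0) (h2 : (inner ℝ v (p - q) : ℝ) ≤ 0) :
    Ray2.carrier ⟨p, u⟩ ∩ Ray2.carrier ⟨q, v⟩ = ∅ := by
  ext x
  simp only [Set.mem_inter_iff, Ray2.carrier, Set.mem_setOf_eq, Set.mem_empty_iff_false,
    iff_false, not_and]
  rintro ⟨s, hs, rfl⟩ ⟨t, ht, hx⟩
  have hqp : q - p = s • u - t • v := by
    have h' : p + s • u - (q + t • v) = 0 := by rw [← hx]; abel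
    have h2' : (q - p) - (s • u - t • v) = -(p + s • u - (q + t • v)) := by abel
    rw [h', neg_zero, sub_eq_zero] at h2'
    exact h2'
  have hpos : (0:ℝ) < inner ℝ (q - p) (q - p) := by
    rw [real_inner_self_eq_norm_sq]
    have h0 : ‖q - p‖ ≠ 0 := norm_ne_zero_iff.mpr (sub_ne_zero.mpr hpq.symm)
    positivity
  have hcalc : (inner ℝ (q - p) (q - p) : ℝ) = s * inner ℝ u (q - p) + t * inner ℝ v (p - q) := by
    nth_rewrite 1 [hqp]
    rw [inner_sub_left, real_inner_smul_left, real_inner_smul_left]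
    have : (inner ℝ v (p - q) : ℝ) = -inner ℝ v (q - p) := by
      rw [← inner_neg_right]; congr 1; abel
    rw [this]; ring
  nlinarith [mul_nonpos_of_nonneg_of_nonpos hs h1, mul_nonpos_of_nonneg_of_nonpos ht h2]
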